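/- arXiv:1011.2780 — 2 statements merged into one kernel-verified Lean document; each statement's English description precedes it below -/
import Mathlib

section
/- Let (X,σ) be a shift space whose language admits a decomposition 𝓛 = 𝓒^p 𝓖 𝓒^s satisfying Conditions (I) and (III). Then either h_top(X,σ) > 0, or X consists of a single periodic orbit. -/
open MeasureTheory Filter Topology
open scoped ENNReal

/-- The full two-sided shift on `p` symbols. -/
abbrev FullShift (p : ℕ) : Type := ℤ → Fin p

/-- The left shift map. -/
def shiftMap {p : ℕ} : FullShift p → FullShift p := fun x n => x (n + 1)

/-- A (two-sided) shift space: a nonempty closed shift-invariant subset of the full shift. -/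
def IsShiftSpace {p : ℕ} (X : Set (FullShift p)) : Prop :=
  X.Nonempty ∧ IsClosed X ∧ shiftMap '' X = X

/-- `x` spells the word `w` starting at position `k`. -/
def spellsAt {p : ℕ} (x : FullShift p) (k : ℤ) (w : List (Fin p)) : Prop :=
  ∀ i : Fin w.length, x (k + (i : ℕ)) = w.get i

/-- The language of a shift space: all finite words occurring in its sequences. -/
def language {p : ℕ} (X : Set (FullShift p)) : Set (List (Fin p)) :=
  {w | ∃ x ∈ X, ∃ k : ℤ, spellsAt x k w}

/-- Words of length `n` in a collection `D`. -/
def wordsOfLen {p : ℕ} (D : Set (List (Fin p))) (n : ℕ) : Set (List (Fin p)) :=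
  {w ∈ D | w.length = n}

/-- Exponential growth rate `h(D) = limsup (1/n) log #D_n` of a collection of words. -/
noncomputable def growth {p : ℕ} (D : Set (List (Fin p))) : ℝ :=
  Filter.atTop.limsup fun n : ℕ => Real.log ((wordsOfLen D n).ncard) / n

/-- Topological entropy of a shift space (= the growth rate of its language). -/
noncomputable def htop {p : ℕ} (X : Set (FullShift p)) : ℝ := growth (language X)

/-- `glueWords m w v = w 0 ++ v 0 ++ w 1 ++ v 1 ++ ⋯ ++ v (m-1) ++ w m`. -/
def glueWords {p : ℕ} : ℕ → (ℕ → List (Fin p)) → (ℕ → List (Fin p)) → List (Fin p)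
  | 0, w, _ => w 0
  | (m + 1), w, v => glueWords m w v ++ v m ++ w (m + 1)

/-- (S)-specification on `G ⊆ L` with gap size `t`. -/
def HasSpecS {p : ℕ} (L G : Set (List (Fin p))) (t : ℕ) : Prop :=
  ∀ (m : ℕ) (w : ℕ → List (Fin p)), (∀ i ≤ m, w i ∈ G) →
    ∃ v : ℕ → List (Fin p), (∀ i < m, v i ∈ L ∧ (v i).length = t) ∧
      glueWords m w v ∈ L

/-- The central cylinder of a word `w`, starting at position `-⌊|w|/2⌋`. -/
def centralCylinder {p : ℕ} (w : List (Fin p)) : Set (FullShift p) :=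
  {x | spellsAt x (-((w.length / 2 : ℕ) : ℤ)) w}

/-- (Per)-specification on `G` with gap size `t`: the glued word can moreover be realized by
a periodic point of period exactly `|x| + t`. -/
def HasSpecPer {p : ℕ} (X : Set (FullShift p)) (G : Set (List (Fin p))) (t : ℕ) : Prop :=
  ∀ (m : ℕ) (w : ℕ → List (Fin p)), (∀ i ≤ m, w i ∈ G) →
    ∃ v : ℕ → List (Fin p), (∀ i < m, v i ∈ language X ∧ (v i).length = t) ∧
      glueWords m w v ∈ language X ∧
      ∃ z ∈ X, shiftMap^[(glueWords m w v).length + t] z = z ∧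
        z ∈ centralCylinder (glueWords m w v)

/-- A decomposition `L = 𝓒ᵖ 𝓖 𝓒ˢ` of a language. -/
def Decomp {p : ℕ} (L Cp G Cs : Set (List (Fin p))) : Prop :=
  Cp ⊆ L ∧ G ⊆ L ∧ Cs ⊆ L ∧
    ∀ w ∈ L, ∃ u v x, u ∈ Cp ∧ v ∈ G ∧ x ∈ Cs ∧ w = u ++ v ++ x

/-- `𝓖(M)`: words of `L` decomposable with prefix and suffix of length at most `M`. -/
def GM {p : ℕ} (L Cp G Cs : Set (List (Fin p))) (M : ℕ) : Set (List (Fin p)) :=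
  {w ∈ L | ∃ u v x, u ∈ Cp ∧ v ∈ G ∧ x ∈ Cs ∧ u.length ≤ M ∧ x.length ≤ M ∧ w = u ++ v ++ x}

/-- Condition (III): uniformly controlled extension of words of `𝓖(M)` to words of `𝓖`. -/
def CondIII {p : ℕ} (L Cp G Cs : Set (List (Fin p))) : Prop :=
  ∀ M : ℕ, ∃ τ : ℕ, ∀ v ∈ GM L Cp G Cs M,
    ∃ u w : List (Fin p), u.length ≤ τ ∧ w.length ≤ τ ∧ u ++ v ++ w ∈ G

/-- Shift invariance of a measure. -/
def ShiftInvariant {p : ℕ} (μ : Measure (FullShift p)) : Prop :=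
  Measure.map shiftMap μ = μ

/-- Measure-theoretic (Kolmogorov–Sinai) entropy of a shift-invariant measure, computed via
the generating partitions into cylinders of length `n`. -/
noncomputable def entropyOf {p : ℕ} (μ : Measure (FullShift p)) : ℝ :=
  Filter.atTop.liminf fun n : ℕ =>
    (∑ w : Fin n → Fin p,
      Real.negMulLog (μ {x : FullShift p | ∀ i : Fin n, x ((i : ℕ) : ℤ) = w i}).toReal) / n

/-- `μ` is a measure of maximal entropy for the shift space `X`. -/
def IsMME {p : ℕ} (X : Set (FullShift p)) (μ : Measure (FullShift p)) : Prop :=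
  IsProbabilityMeasure μ ∧ ShiftInvariant μ ∧ μ X = 1 ∧ entropyOf μ = htop X

/-- A shift space is intrinsically ergodic if it has exactly one measure of maximal entropy. -/
def IntrinsicallyErgodic {p : ℕ} (X : Set (FullShift p)) : Prop :=
  ∃! μ : Measure (FullShift p), IsMME X μ

/-- The set of points of `X` periodic of period at most `n`. -/
def PerN {p : ℕ} (X : Set (FullShift p)) (n : ℕ) : Set (FullShift p) :=
  {x ∈ X | ∃ k, 1 ≤ k ∧ k ≤ n ∧ shiftMap^[k] x = x}

/-- The measure evenly distributed on the periodic points of period at most `n`. -/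
noncomputable def perMeasure {p : ℕ} (X : Set (FullShift p)) (n : ℕ) :
    Measure (FullShift p) :=
  (((PerN X n).ncard : ℝ≥0∞))⁻¹ •
    Measure.sum (fun x : (PerN X n) => Measure.dirac (x : FullShift p))

/-- Weak* convergence of a sequence of measures. -/
def WeakStarLimit {p : ℕ} (μs : ℕ → Measure (FullShift p)) (μ : Measure (FullShift p)) : Prop :=
  ∀ f : C(FullShift p, ℝ),
    Tendsto (fun n => ∫ x, f x ∂(μs n)) atTop (𝓝 (∫ x, f x ∂μ))

/-- `Y` is a subshift factor of `X`. -/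
def IsSubshiftFactor {p q : ℕ} (X : Set (FullShift p)) (Y : Set (FullShift q)) : Prop :=
  IsShiftSpace Y ∧ ∃ π : FullShift p → FullShift q,
    Continuous π ∧ π '' X = Y ∧ ∀ x ∈ X, π (shiftMap x) = shiftMap (π x)

/-! ### Auxiliary material for the proof -/

section AuxShift

variable {p : ℕ}

lemma aux_shift_iter (k : ℕ) (x : FullShift p) (n : ℤ) :
    (shiftMap^[k] x) n = x (n + k) := by
  induction k generalizing x n with
  | zero => simp
  | succ k ih =>
    rw [Function.iterate_succ_apply, ih]
    show x (n + k + 1) = _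
    congr 1
    push_cast
    ring

lemma aux_mem_iter {X : Set (FullShift p)} (hinv : shiftMap '' X = X)
    {x : FullShift p} (hx : x ∈ X) : ∀ k : ℕ, shiftMap^[k] x ∈ X := by
  intro k
  induction k with
  | zero => simpa
  | succ k ih =>
    rw [Function.iterate_succ_apply']
    rw [← hinv]
    exact ⟨_, ih, rfl⟩

lemma aux_window_mem {X : Set (FullShift p)} {x : FullShift p} (hx : x ∈ X)
    (k : ℤ) (n : ℕ) : (List.ofFn fun j : Fin n => x (k + j)) ∈ language X := by
  refine ⟨x, hx, k, ?_⟩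
  intro i
  rw [List.get_ofFn]
  rfl

lemma aux_window_getElem? (x : FullShift p) (k : ℤ) (n : ℕ) {j : ℕ} (hj : j < n) :
    (List.ofFn fun i : Fin n => x (k + i))[j]? = some (x (k + j)) := by
  simp [List.getElem?_ofFn, hj]

lemma aux_spelling {X : Set (FullShift p)} {w : List (Fin p)}
    (hw : w ∈ language X) :
    ∃ x ∈ X, ∃ k : ℤ, ∀ j, j < w.length → w[j]? = some (x (k + j)) := by
  obtain ⟨x, hx, k, hs⟩ := hw
  refine ⟨x, hx, k, fun j hj => ?_⟩
  rw [List.getElem?_eq_getElem hj]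
  have := hs ⟨j, hj⟩
  simp only [List.get_eq_getElem] at this
  simp [← this]

end AuxShift

section AuxGlue

variable {p : ℕ}

/-- Starting position of the `l`-th block inside a glued word. -/
def gluePos (w v : ℕ → List (Fin p)) (l : ℕ) : ℕ :=
  ∑ r ∈ Finset.range l, ((w r).length + (v r).length)

lemma gluePos_succ (w v : ℕ → List (Fin p)) (l : ℕ) :
    gluePos w v (l + 1) = gluePos w v l + ((w l).length + (v l).length) :=
  Finset.sum_range_succ _ l

lemma gluePos_mono (w v : ℕ → List (Fin p)) {l l' : ℕ} (h : l ≤ l') :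
    gluePos w v l ≤ gluePos w v l' := by
  unfold gluePos
  exact Finset.sum_le_sum_of_subset (Finset.range_subset_range.2 h)

lemma glue_length (m : ℕ) (w v : ℕ → List (Fin p)) :
    (glueWords m w v).length = gluePos w v m + (w m).length := by
  induction m with
  | zero => simp [glueWords, gluePos]
  | succ m ih =>
    show (glueWords m w v ++ v m ++ w (m + 1)).length = _
    rw [gluePos_succ]
    simp [ih]
    ring

lemma glue_getElem? (m : ℕ) (w v : ℕ → List (Fin p)) :
    ∀ l ≤ m, ∀ j < (w l).length,
      (glueWords m w v)[gluePos w v l + j]? = (w l)[j]? := by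
  induction m with
  | zero =>
    intro l hl j hj
    interval_cases l
    simp [glueWords, gluePos]
  | succ m ih =>
    intro l hl j hj
    show ((glueWords m w v ++ v m) ++ w (m + 1))[gluePos w v l + j]? = _
    rcases Nat.lt_or_ge l (m + 1) with hlt | hge
    · have hl' : l ≤ m := Nat.lt_succ_iff.mp hlt
      have hidx : gluePos w v l + j < (glueWords m w v).length := by
        rw [glue_length]
        have h1 : gluePos w v l + j < gluePos w v l + (w l).length := by omega
        have h2 : gluePos w v l + (w l).length ≤ gluePos w v m + (w m).length := by
          rcases Nat.lt_or_ge l m with hlm | hlm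
          · have : gluePos w v (l + 1) ≤ gluePos w v m := gluePos_mono w v hlm
            rw [gluePos_succ] at this
            omega
          · have : l = m := by omega
            subst this; omega
        omega
      have hidx2 : gluePos w v l + j < (glueWords m w v ++ v m).length := by
        simp; omega
      rw [List.getElem?_append, if_pos hidx2, List.getElem?_append, if_pos hidx]
      exact ih l hl' j hj
    · have : l = m + 1 := by omega
      subst this
      have hlen : (glueWords m w v ++ v m).length = gluePos w v (m + 1) := by
        simp [glue_length, gluePos_succ]
        ring
      rw [List.getElem?_append_right (by omega)]
      congr 1
      omega

/-- block sequence: pattern `ε i = false` gives pair (g,h) at super-step i, `true` gives (h,g). -/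
def blkB (g h : List (Fin p)) (ε : ℕ → Bool) (l : ℕ) : List (Fin p) :=
  if ε (l / 2) = decide (l % 2 = 1) then g else h

def extB (k : ℕ) (δ : Fin k → Bool) : ℕ → Bool :=
  fun i => if h : i < k then δ ⟨i, h⟩ else false

lemma blkB_mem {G : Set (List (Fin p))} {g h : List (Fin p)}
    (hg : g ∈ G) (hh : h ∈ G) (ε : ℕ → Bool) (l : ℕ) : blkB g h ε l ∈ G := by
  unfold blkB; split <;> assumption

lemma blkB_even_f {g h : List (Fin p)} {ε : ℕ → Bool} {i : ℕ}
    (hε : ε i = false) : blkB g h ε (2 * i) = g := by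
  unfold blkB
  rw [Nat.mul_div_cancel_left i (by norm_num), Nat.mul_mod_right]
  simp [hε]

lemma blkB_even_t {g h : List (Fin p)} {ε : ℕ → Bool} {i : ℕ}
    (hε : ε i = true) : blkB g h ε (2 * i) = h := by
  unfold blkB
  rw [Nat.mul_div_cancel_left i (by norm_num), Nat.mul_mod_right]
  simp [hε]

lemma blkB_odd_f {g h : List (Fin p)} {ε : ℕ → Bool} {i : ℕ}
    (hε : ε i = false) : blkB g h ε (2 * i + 1) = h := by
  unfold blkB
  have h1 : (2 * i + 1) / 2 = i := by omega
  have h2 : (2 * i + 1) % 2 = 1 := by omega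
  rw [h1, h2]
  simp [hε]

lemma blkB_eq_of_agree {g h : List (Fin p)} {ε ε' : ℕ → Bool} {i : ℕ}
    (hag : ∀ r < i, ε r = ε' r) : ∀ l < 2 * i, blkB g h ε l = blkB g h ε' l := by
  intro l hl
  unfold blkB
  rw [hag (l / 2) (by omega)]

lemma blkB_sum (g h : List (Fin p)) (ε : ℕ → Bool) (k : ℕ) :
    ∑ r ∈ Finset.range (2 * k), (blkB g h ε r).length = k * (g.length + h.length) := by
  induction k with
  | zero => simp
  | succ k ih =>
    rw [show 2 * (k + 1) = (2 * k + 1) + 1 by ring, Finset.sum_range_succ,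
      Finset.sum_range_succ, ih]
    rcases Bool.eq_false_or_eq_true (ε k) with hb | hb
    · rw [blkB_even_t hb]
      have : blkB g h ε (2 * k + 1) = g := by
        unfold blkB
        have h1 : (2 * k + 1) / 2 = k := by omega
        have h2 : (2 * k + 1) % 2 = 1 := by omega
        rw [h1, h2]
        simp [hb]
      rw [this]; ring
    · rw [blkB_even_f hb, blkB_odd_f hb]; ring

lemma gluePos_congr {t : ℕ} (w : ℕ → List (Fin p)) {v : ℕ → List (Fin p)} {l : ℕ}
    (hv : ∀ r < l, (v r).length = t) :
    gluePos w v l = ∑ r ∈ Finset.range l, ((w r).length + t) := by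
  unfold gluePos
  refine Finset.sum_congr rfl fun r hr => ?_
  rw [hv r (Finset.mem_range.mp hr)]

end AuxGlue

section AuxCount

variable {p : ℕ}

lemma aux_finite_len {n : ℕ} : {w : List (Fin p) | w.length = n}.Finite := by
  have : {w : List (Fin p) | w.length = n} ⊆ Set.range (List.ofFn : (Fin n → Fin p) → _) := by
    intro w hw
    refine ⟨fun i => w.get (Fin.cast hw.symm i), ?_⟩
    apply List.ext_getElem
    · simpa using hw.symm
    · intro i h1 h2
      simp [List.get_eq_getElem]
  exact (Set.finite_range _).subset this

lemma aux_wordsOfLen_finite (D : Set (List (Fin p))) (n : ℕ) :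
    (wordsOfLen D n).Finite :=
  aux_finite_len.subset (fun _ hw => hw.2)

lemma aux_wordsOfLen_ncard_le (D : Set (List (Fin p))) (n : ℕ) :
    (wordsOfLen D n).ncard ≤ p ^ n := by
  have h1 : (wordsOfLen D n).ncard ≤ {w : List (Fin p) | w.length = n}.ncard :=
    Set.ncard_le_ncard (fun w hw => hw.2) aux_finite_len
  refine h1.trans ?_
  have h2 : {w : List (Fin p) | w.length = n} ⊆
      ↑((Finset.univ : Finset (Fin n → Fin p)).image List.ofFn) := by
    intro w hw
    simp only [Finset.coe_image, Finset.coe_univ, Set.image_univ]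
    refine ⟨fun i => w.get (Fin.cast hw.symm i), ?_⟩
    apply List.ext_getElem
    · simpa using hw.symm
    · intro i h1 h2
      simp [List.get_eq_getElem]
  calc {w : List (Fin p) | w.length = n}.ncard
      ≤ (↑((Finset.univ : Finset (Fin n → Fin p)).image List.ofFn) : Set _).ncard :=
        Set.ncard_le_ncard h2 (Finset.finite_toSet _)
    _ = ((Finset.univ : Finset (Fin n → Fin p)).image List.ofFn).card :=
        Set.ncard_coe_finset _
    _ ≤ (Finset.univ : Finset (Fin n → Fin p)).card := Finset.card_image_le
    _ = p ^ n := by simp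

lemma aux_growth_lower (D : Set (List (Fin p))) (hp : 1 ≤ p) {c : ℝ}
    (hfreq : ∀ N : ℕ, ∃ n : ℕ, N ≤ n ∧ c ≤ Real.log ((wordsOfLen D n).ncard) / n) :
    c ≤ growth D := by
  set f : ℕ → ℝ := fun n => Real.log ((wordsOfLen D n).ncard) / n with hf
  have hlogp : (0 : ℝ) ≤ Real.log p := Real.log_nonneg (by exact_mod_cast hp)
  have hbound : ∀ n, f n ≤ Real.log p := by
    intro n
    rcases Nat.eq_zero_or_pos n with rfl | hn
    · simp [hf]
      exact hlogp
    · have h1 : Real.log ((wordsOfLen D n).ncard) ≤ n * Real.log p := by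
        rcases Nat.eq_zero_or_pos (wordsOfLen D n).ncard with h0 | h0
        · rw [h0]
          simp
          positivity
        · calc Real.log ((wordsOfLen D n).ncard) ≤ Real.log ((p : ℝ) ^ n) := by
                apply Real.log_le_log (by exact_mod_cast h0)
                exact_mod_cast aux_wordsOfLen_ncard_le D n
            _ = n * Real.log p := by rw [Real.log_pow]
      have hn' : (0 : ℝ) < n := by exact_mod_cast hn
      rw [hf]
      calc Real.log ((wordsOfLen D n).ncard) / n ≤ (n * Real.log p) / n := by
            gcongr
        _ = Real.log p := by field_simp
  have hBdd : IsBoundedUnder (· ≤ ·) atTop f :=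
    ⟨Real.log p, eventually_map.mpr (Eventually.of_forall hbound)⟩
  apply Filter.le_limsup_of_frequently_le ?_ hBdd
  rw [Filter.frequently_atTop]
  exact hfreq

end AuxCount

/-! ### The key combinatorial lemma -/

lemma aux_key {p t : ℕ} {X : Set (FullShift p)} (hp : 1 ≤ p)
    {G : Set (List (Fin p))} (hspec : HasSpecS (language X) G t)
    (hpos : ¬ 0 < htop X) {g h : List (Fin p)} (hg : g ∈ G) (hhG : h ∈ G)
    (hga : 1 ≤ g.length) :
    ∀ j, j + (g.length + t) < h.length → h[j + (g.length + t)]? = h[j]? := by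
  classical
  set a := g.length with ha
  set b := h.length with hb
  -- the glued families
  have hv : ∀ (k : ℕ) (δ : Fin k → Bool),
      ∃ v : ℕ → List (Fin p),
        (∀ i < 2 * k - 1, v i ∈ language X ∧ (v i).length = t) ∧
        glueWords (2 * k - 1) (blkB g h (extB k δ)) v ∈ language X :=
    fun k δ => hspec (2 * k - 1) _ (fun i _ => blkB_mem hg hhG _ i)
  choose vv hv1 hv2 using hv
  set W : ∀ k : ℕ, (Fin k → Bool) → List (Fin p) :=
    fun k δ => glueWords (2 * k - 1) (blkB g h (extB k δ)) (vv k δ) with hW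
  -- length of glued words
  have hWlen : ∀ (k : ℕ), 1 ≤ k → ∀ δ : Fin k → Bool,
      (W k δ).length = k * (a + b) + (2 * k - 1) * t := by
    intro k hk δ
    rw [hW]
    simp only
    rw [glue_length]
    rw [gluePos_congr (blkB g h (extB k δ)) (fun r hr => (hv1 k δ r hr).2)]
    have hsplit : ∑ r ∈ Finset.range (2 * k - 1), ((blkB g h (extB k δ) r).length + t)
        = (∑ r ∈ Finset.range (2 * k - 1), (blkB g h (extB k δ) r).length) + (2 * k - 1) * t := by
      rw [Finset.sum_add_distrib]
      simp [mul_comm]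
    rw [hsplit]
    have h2k : 2 * k = (2 * k - 1) + 1 := by omega
    have := blkB_sum g h (extB k δ) k
    rw [h2k, Finset.sum_range_succ] at this
    simp only [← ha, ← hb] at this
    omega
  -- dichotomy on injectivity
  by_cases hinj : ∀ k : ℕ, 1 ≤ k → Function.Injective (W k)
  · -- entropy is positive: contradiction
    exfalso
    apply hpos
    have hcpos : (0 : ℝ) < Real.log 2 / (a + b + 2 * t) := by
      apply div_pos (Real.log_pos one_lt_two)
      have : (1 : ℝ) ≤ a := by exact_mod_cast hga
      positivity
    have hfreq : ∀ N : ℕ, ∃ n : ℕ, N ≤ n ∧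
        Real.log 2 / (a + b + 2 * t) ≤ Real.log ((wordsOfLen (language X) n).ncard) / n := by
      intro N
      set k := N + 1 with hkdef
      have hk1 : 1 ≤ k := by omega
      set n := k * (a + b) + (2 * k - 1) * t with hn
      have hnk : k ≤ n := by
        have : k * 1 ≤ k * (a + b) := Nat.mul_le_mul_left k (by omega)
        omega
      refine ⟨n, by omega, ?_⟩
      -- the 2^k distinct words of length n
      have hsub : ↑((Finset.univ : Finset (Fin k → Bool)).image (W k)) ⊆
          wordsOfLen (language X) n := by
        intro w hw
        simp only [Finset.coe_image, Finset.coe_univ, Set.image_univ, Set.mem_range] at hw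
        obtain ⟨δ, rfl⟩ := hw
        exact ⟨hv2 k δ, hWlen k hk1 δ⟩
      have hcard : ((Finset.univ : Finset (Fin k → Bool)).image (W k)).card = 2 ^ k := by
        rw [Finset.card_image_of_injective _ (hinj k hk1)]
        simp
      have hncard : 2 ^ k ≤ (wordsOfLen (language X) n).ncard := by
        calc 2 ^ k = ((Finset.univ : Finset (Fin k → Bool)).image (W k)).card := hcard.symm
          _ = (↑((Finset.univ : Finset (Fin k → Bool)).image (W k)) : Set _).ncard :=
              (Set.ncard_coe_finset _).symm
          _ ≤ (wordsOfLen (language X) n).ncard :=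
              Set.ncard_le_ncard hsub (aux_wordsOfLen_finite _ n)
      have hnpos : (0 : ℝ) < n := by
        have : 1 ≤ n := by omega
        exact_mod_cast this
      have hlog : (k : ℝ) * Real.log 2 ≤ Real.log ((wordsOfLen (language X) n).ncard) := by
        rw [← Real.log_pow]
        apply Real.log_le_log (by positivity)
        exact_mod_cast hncard
      have hnle : (n : ℝ) ≤ k * (a + b + 2 * t) := by
        have : n ≤ k * (a + b + 2 * t) := by
          have h1 : (2 * k - 1) * t ≤ 2 * k * t := Nat.mul_le_mul_right t (by omega)
          calc n = k * (a + b) + (2 * k - 1) * t := hn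
            _ ≤ k * (a + b) + 2 * k * t := by omega
            _ = k * (a + b + 2 * t) := by ring
        exact_mod_cast this
      have hkpos : (0 : ℝ) < k := by exact_mod_cast hk1
      calc Real.log 2 / (a + b + 2 * t)
          = (k * Real.log 2) / (k * (a + b + 2 * t)) := by
            rw [mul_div_mul_left _ _ (ne_of_gt hkpos)]
        _ ≤ (k * Real.log 2) / n := by
            apply div_le_div_of_nonneg_left ?_ hnpos hnle
            have hl2 : (0 : ℝ) ≤ Real.log 2 := Real.log_nonneg one_le_two
            positivity
        _ ≤ Real.log ((wordsOfLen (language X) n).ncard) / n := by gcongr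
    have := aux_growth_lower (language X) hp hfreq
    calc (0 : ℝ) < Real.log 2 / (a + b + 2 * t) := hcpos
      _ ≤ htop X := this
  · -- a coincidence: extract the periodicity
    push_neg at hinj
    obtain ⟨k, hk1, hninj⟩ := hinj
    rw [Function.not_injective_iff] at hninj
    obtain ⟨δ, δ', heq, hne⟩ := hninj
    have hdiff : ∃ i : ℕ, extB k δ i ≠ extB k δ' i := by
      obtain ⟨i, hi⟩ := Function.ne_iff.mp hne
      exact ⟨i.1, by simp [extB, i.2, hi]⟩
    set i₀ := Nat.find hdiff with hi₀def
    have hi₀ : extB k δ i₀ ≠ extB k δ' i₀ := Nat.find_spec hdiff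
    have hmin : ∀ r < i₀, extB k δ r = extB k δ' r := by
      intro r hr
      have := Nat.find_min hdiff hr
      simpa using this
    have hi₀k : i₀ < k := by
      by_contra hcon
      apply hi₀
      simp [extB, dif_neg (by omega : ¬ i₀ < k)]
    -- symmetric core
    have core : ∀ (ε ε' : ℕ → Bool) (v v' : ℕ → List (Fin p)),
        (∀ r < 2 * k - 1, (v r).length = t) → (∀ r < 2 * k - 1, (v' r).length = t) →
        glueWords (2 * k - 1) (blkB g h ε) v = glueWords (2 * k - 1) (blkB g h ε') v' →
        (∀ r < i₀, ε r = ε' r) → ε i₀ = false → ε' i₀ = true →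
        ∀ j, j + (a + t) < b → h[j + (a + t)]? = h[j]? := by
      intro ε ε' v v' hvl hvl' hWeq hag hεf hεt j hj
      set Q := ∑ r ∈ Finset.range (2 * i₀), ((blkB g h ε r).length + t) with hQ
      have hQ' : (∑ r ∈ Finset.range (2 * i₀), ((blkB g h ε' r).length + t)) = Q := by
        rw [hQ]
        refine Finset.sum_congr rfl fun r hr => ?_
        rw [blkB_eq_of_agree hag r (Finset.mem_range.mp hr)]
      have hl1 : 2 * i₀ ≤ 2 * k - 1 := by omega
      have hl2 : 2 * i₀ + 1 ≤ 2 * k - 1 := by omega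
      -- e1 : occurrence of h at Q in the ε'-word
      have e1 : ∀ j' < b, (glueWords (2 * k - 1) (blkB g h ε') v')[Q + j']? = h[j']? := by
        intro j' hj'
        have hblk : blkB g h ε' (2 * i₀) = h := blkB_even_t hεt
        have := glue_getElem? (2 * k - 1) (blkB g h ε') v' (2 * i₀) hl1 j'
          (by rw [hblk]; exact hj')
        rw [gluePos_congr (blkB g h ε') (fun r hr => hvl' r (lt_of_lt_of_le hr hl1))] at this
        rw [hQ', hblk] at this
        exact this
      -- e2 : occurrence of h at Q + (a + t) in the ε-word
      have e2 : ∀ j' < b, (glueWords (2 * k - 1) (blkB g h ε) v)[(Q + (a + t)) + j']? = h[j']? := by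
        intro j' hj'
        have hblk : blkB g h ε (2 * i₀ + 1) = h := blkB_odd_f hεf
        have hblk0 : blkB g h ε (2 * i₀) = g := blkB_even_f hεf
        have := glue_getElem? (2 * k - 1) (blkB g h ε) v (2 * i₀ + 1) hl2 j'
          (by rw [hblk]; exact hj')
        rw [gluePos_congr (blkB g h ε) (fun r hr => hvl r (lt_of_lt_of_le hr hl2))] at this
        rw [Finset.sum_range_succ, hblk0, ← hQ, hblk] at this
        exact this
      have key1 := e1 (j + (a + t)) hj
      have key2 := e2 j (by omega)
      rw [← hWeq] at key1
      rw [← key1, ← key2]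
      congr 1
      ring
    rcases Bool.eq_false_or_eq_true (extB k δ i₀) with hbt | hbt
    · -- extB k δ i₀ = true, so extB k δ' i₀ = false : apply core with roles swapped
      have hbf : extB k δ' i₀ = false := by
        rcases Bool.eq_false_or_eq_true (extB k δ' i₀) with h1 | h1
        · exact absurd (hbt.trans h1.symm) hi₀
        · exact h1
      exact core (extB k δ') (extB k δ) (vv k δ') (vv k δ)
        (fun r hr => (hv1 k δ' r hr).2) (fun r hr => (hv1 k δ r hr).2)
        heq.symm (fun r hr => (hmin r hr).symm) hbf hbt
    · have hbf : extB k δ' i₀ = true := by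
        rcases Bool.eq_false_or_eq_true (extB k δ' i₀) with h1 | h1
        · exact h1
        · exact absurd (hbt.trans h1.symm) hi₀
      exact core (extB k δ) (extB k δ') (vv k δ) (vv k δ')
        (fun r hr => (hv1 k δ r hr).2) (fun r hr => (hv1 k δ' r hr).2)
        heq (fun r hr => hmin r hr) hbt hbf

/-- **Proposition 2.4.** If the language of a shift space admits a decomposition satisfying
Conditions (I) and (III), then either the shift space has positive topological entropy,
or it consists of a single periodic orbit. -/
theorem posent_or_single_periodic_orbit {p : ℕ} (X : Set (FullShift p))
    (hX : IsShiftSpace X) (Cp G Cs : Set (List (Fin p)))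
    (hdec : Decomp (language X) Cp G Cs)
    (hI : ∃ t : ℕ, HasSpecS (language X) G t)
    (hIII : CondIII (language X) Cp G Cs) :
    0 < htop X ∨
      ∃ x ∈ X, (∃ n : ℕ, 1 ≤ n ∧ shiftMap^[n] x = x) ∧
        X = Set.range fun k : ℕ => shiftMap^[k] x := by
  classical
  by_cases hpos : 0 < htop X
  · exact Or.inl hpos
  right
  obtain ⟨x₀, hx₀⟩ := hX.1
  have hp : 1 ≤ p := by
    rcases Nat.eq_zero_or_pos p with rfl | hp
    · exact (x₀ 0).elim0
    · exact hp
  obtain ⟨t, hspec⟩ := hI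
  -- every word of the language occurs inside a word of `G`
  have hembed : ∀ w ∈ language X, ∃ hw ∈ G, ∃ π : ℕ,
      π + w.length ≤ hw.length ∧ ∀ j < w.length, hw[π + j]? = w[j]? := by
    intro w hw
    obtain ⟨u, v, x, hu, hv, hx, hweq⟩ := hdec.2.2.2 w hw
    obtain ⟨τ, hτ⟩ := hIII (max u.length x.length)
    obtain ⟨u', x', hu', hx', hG⟩ := hτ w
      ⟨hw, u, v, x, hu, hv, hx, le_max_left _ _, le_max_right _ _, hweq⟩
    refine ⟨u' ++ w ++ x', hG, u'.length, ?_, ?_⟩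
    · simp
    · intro j hj
      rw [List.getElem?_append, if_pos (by simp; omega),
        List.getElem?_append_right (by omega), Nat.add_sub_cancel_left]
  -- and inside a long word of `G`
  have hembed' : ∀ w ∈ language X, ∀ N : ℕ, ∃ hw ∈ G, N ≤ hw.length ∧ ∃ π : ℕ,
      π + w.length ≤ hw.length ∧ ∀ j < w.length, hw[π + j]? = w[j]? := by
    intro w hw N
    obtain ⟨x, hxX, k, hsp⟩ := aux_spelling hw
    have hw2mem : (List.ofFn fun j : Fin (max w.length N) => x (k + j)) ∈ language X :=
      aux_window_mem hxX k _
    obtain ⟨hh, hhG, π, hπ, hocc⟩ := hembed _ hw2mem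
    have hw2len : (List.ofFn fun j : Fin (max w.length N) => x (k + j)).length
        = max w.length N := by simp
    refine ⟨hh, hhG, by omega, π, by omega, ?_⟩
    intro j hj
    rw [hocc j (by omega), aux_window_getElem? x k _ (by omega), hsp j hj]
  -- a nonempty word of `G`
  obtain ⟨g₀, hg₀G, hg₀len, -⟩ :=
    hembed' (List.ofFn fun j : Fin 1 => x₀ (0 + j)) (aux_window_mem hx₀ 0 1) 1
  set q := g₀.length + t with hq
  have hq1 : 1 ≤ q := by omega
  -- every word of the language is q-periodic
  have hper : ∀ w ∈ language X, ∀ j, j + q < w.length → w[j + q]? = w[j]? := by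
    intro w hw j hj
    obtain ⟨hh, hhG, hhlen, π, hπ, hocc⟩ := hembed' w hw 0
    have hkey := aux_key hp hspec hpos hg₀G hhG hg₀len (π + j) (by omega)
    have h1 := hocc (j + q) hj
    have h2 := hocc j (by omega)
    rw [← h1, ← h2, ← hkey]
    congr 1
    omega
  -- multi-step periodicity
  have hperm : ∀ w ∈ language X, ∀ (c : ℕ) (j : ℕ), j + c * q < w.length →
      w[j + c * q]? = w[j]? := by
    intro w hw c
    induction c with
    | zero => intro j hj; simp
    | succ c ih =>
      intro j hj
      have h1 : j + (c + 1) * q = (j + c * q) + q := by ring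
      have h1' : (c + 1) * q = c * q + q := by ring
      rw [h1, hper w hw (j + c * q) (by omega)]
      exact ih j (by omega)
  -- mod-q periodicity for words
  have hmod : ∀ w ∈ language X, ∀ l l', l' ≤ l → l % q = l' % q → l < w.length →
      w[l]? = w[l']? := by
    intro w hw l l' hle hm hlen
    have hdvd : q ∣ (l - l') := (Nat.modEq_iff_dvd' hle).mp hm.symm
    obtain ⟨c, hc⟩ := hdvd
    have h3 : l' + c * q = l := by
      rw [mul_comm c q]
      omega
    rw [← h3] at hlen
    rw [← h3]
    exact hperm w hw c l' hlen
  -- every point of X is q-periodic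
  have hXper : ∀ x ∈ X, ∀ n : ℤ, x (n + q) = x n := by
    intro x hxX n
    have hwin := aux_window_mem hxX n (q + 1)
    have hlen : (List.ofFn fun j : Fin (q + 1) => x (n + j)).length = q + 1 := by simp
    have h0 := hper _ hwin 0 (by omega)
    simp only [Nat.zero_add] at h0
    rw [aux_window_getElem? x n (q + 1) (by omega : q < q + 1),
      aux_window_getElem? x n (q + 1) (by omega : 0 < q + 1)] at h0
    have := Option.some.inj h0
    simpa using this
  -- ℤ multi-step periodicity
  have hZstep : ∀ x ∈ X, ∀ (c : ℤ) (n : ℤ), x (n + c * q) = x n := by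
    intro x hxX c
    induction c using Int.induction_on with
    | zero => intro n; simp
    | succ c ih =>
      intro n
      have h1 : n + ((c : ℤ) + 1) * q = (n + c * q) + q := by ring
      rw [h1, hXper x hxX (n + c * q)]
      exact ih n
    | pred c ih =>
      intro n
      have h2 := hXper x hxX (n + (-(c : ℤ) - 1) * q)
      have h3 : (n + (-(c : ℤ) - 1) * q) + q = n + (-(c : ℤ)) * q := by ring
      rw [h3] at h2
      rw [← h2]
      exact ih n
  have hZmod : ∀ x ∈ X, ∀ n m : ℤ, n % q = m % q → x n = x m := by
    intro x hxX n m hm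
    have h1 : ∀ r : ℤ, x r = x (r % q) := by
      intro r
      have := hZstep x hxX (r / q) (r % q)
      have h2 : r % q + (r / q) * q = r := by
        rw [mul_comm]
        exact Int.emod_add_mul_ediv r q
      rw [h2] at this
      exact this
    rw [h1 n, h1 m, hm]
  -- any point of X lies on the forward orbit of x₀
  have horb : ∀ y ∈ X, ∃ d : ℕ, ∀ n : ℤ, y n = x₀ (n + d) := by
    intro y hy
    have hwmem : (List.ofFn fun j : Fin q => x₀ (0 + j)) ∈ language X :=
      aux_window_mem hx₀ 0 q
    have hw'mem : (List.ofFn fun j : Fin q => y (0 + j)) ∈ language X :=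
      aux_window_mem hy 0 q
    obtain ⟨h₁, h₁G, π₁, hπ₁, hocc₁⟩ := hembed _ hwmem
    obtain ⟨h₂, h₂G, π₂, hπ₂, hocc₂⟩ := hembed _ hw'mem
    rw [List.length_ofFn] at hπ₁ hπ₂
    set ws : ℕ → List (Fin p) := fun l => if l = 0 then h₁ else h₂ with hws
    have hwsG : ∀ i ≤ 1, ws i ∈ G := by
      intro i hi
      rw [hws]
      by_cases hi0 : i = 0 <;> simp [hi0, h₁G, h₂G]
    obtain ⟨v, hv1, hv2⟩ := hspec 1 ws hwsG
    have hvt : (v 0).length = t := (hv1 0 (by omega)).2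
    have hgp0 : gluePos ws v 0 = 0 := by simp [gluePos]
    have hgp1 : gluePos ws v 1 = h₁.length + t := by
      simp [gluePos, hws, hvt]
    have hWlen : (glueWords 1 ws v).length = h₁.length + t + h₂.length := by
      rw [glue_length, hgp1]
      simp [hws]
    have hocc1W : ∀ j < h₁.length, (glueWords 1 ws v)[j]? = h₁[j]? := by
      intro j hj
      have := glue_getElem? 1 ws v 0 (by omega) j (by simpa [hws] using hj)
      rw [hgp0] at this
      simpa [hws] using this
    have hocc2W : ∀ j < h₂.length,
        (glueWords 1 ws v)[(h₁.length + t) + j]? = h₂[j]? := by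
      intro j hj
      have := glue_getElem? 1 ws v 1 le_rfl j (by simpa [hws] using hj)
      rw [hgp1] at this
      simpa [hws] using this
    have hoccw : ∀ j < q, (glueWords 1 ws v)[π₁ + j]? = some (x₀ (0 + (j : ℕ))) := by
      intro j hj
      rw [hocc1W (π₁ + j) (by omega), hocc₁ j (by simp; omega),
        aux_window_getElem? x₀ 0 q hj]
    have hoccw' : ∀ j < q,
        (glueWords 1 ws v)[(h₁.length + t + π₂) + j]? = some (y (0 + (j : ℕ))) := by
      intro j hj
      have h1 : (h₁.length + t + π₂) + j = (h₁.length + t) + (π₂ + j) := by omega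
      rw [h1, hocc2W (π₂ + j) (by omega), hocc₂ j (by simp; omega),
        aux_window_getElem? y 0 q hj]
    set π' := h₁.length + t + π₂ with hπ'
    have hππ' : π₁ + q ≤ π' := by omega
    set d := π' - π₁ with hd
    have hdq : π₁ + d = π' := by omega
    have hkey : ∀ j : ℕ, j < q → y ((j : ℕ) : ℤ) = x₀ (((j : ℕ) : ℤ) + (d : ℕ)) := by
      intro j hj
      have hr : (d + j) % q < q := Nat.mod_lt _ (by omega)
      have h2 : (glueWords 1 ws v)[π' + j]? = (glueWords 1 ws v)[π₁ + (d + j) % q]? := by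
        apply hmod _ hv2 (π' + j) (π₁ + (d + j) % q) ?_ ?_ ?_
        · have : (d + j) % q ≤ d + j := Nat.mod_le _ _
          omega
        · have h3 : π' + j = π₁ + (d + j) := by omega
          rw [h3]
          exact (Nat.add_mod_mod _ _ _).symm
        · rw [hWlen]
          omega
      have h3 := hoccw ((d + j) % q) hr
      have h1 := hoccw' j hj
      have h4 : some (y ((0 : ℤ) + (j : ℕ))) = some (x₀ ((0 : ℤ) + (((d + j) % q : ℕ) : ℤ))) := by
        rw [← h1, h2, h3]
      have h5 := Option.some.inj h4
      have h6 : x₀ ((((d + j) % q : ℕ) : ℤ)) = x₀ (((j + d : ℕ) : ℤ)) := by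
        apply hZmod x₀ hx₀
        have hnat : ((d + j) % q) % q = (j + d) % q := by
          rw [Nat.mod_mod_of_dvd _ dvd_rfl]
          congr 1
          omega
        exact_mod_cast hnat
      have h7 : y ((j : ℕ) : ℤ) = x₀ ((((d + j) % q : ℕ) : ℤ)) := by
        simpa using h5
      rw [h7, h6]
      push_cast
      ring_nf
    refine ⟨d, fun n => ?_⟩
    have hq0 : (0 : ℤ) < (q : ℤ) := by exact_mod_cast hq1
    have hnn : 0 ≤ n % (q : ℤ) := Int.emod_nonneg n (by omega)
    have hlt : n % (q : ℤ) < q := Int.emod_lt_of_pos n hq0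
    set j : ℕ := (n % (q : ℤ)).toNat with hjdef
    have hcast : ((j : ℕ) : ℤ) = n % q := Int.toNat_of_nonneg hnn
    have hjq : j < q := by
      have := hlt
      rw [← hcast] at this
      exact_mod_cast this
    have e1 : y n = y ((j : ℕ) : ℤ) := by
      apply hZmod y hy
      rw [hcast]
      exact (Int.emod_emod_of_dvd n dvd_rfl).symm
    have e2 := hkey j hjq
    have e3 : x₀ (((j : ℕ) : ℤ) + (d : ℕ)) = x₀ (n + d) := by
      apply hZmod x₀ hx₀
      have hjn : ((j : ℕ) : ℤ) % q = n % q := by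
        rw [hcast]
        exact Int.emod_emod_of_dvd n dvd_rfl
      exact Int.ModEq.add_right (d : ℤ) hjn
    rw [e1, e2, e3]
  refine ⟨x₀, hx₀, ⟨q, hq1, ?_⟩, ?_⟩
  · funext n
    rw [aux_shift_iter]
    exact hXper x₀ hx₀ n
  · apply Set.eq_of_subset_of_subset
    · intro y hy
      obtain ⟨d, hd⟩ := horb y hy
      refine ⟨d, funext fun n => ?_⟩
      show (shiftMap^[d] x₀) n = y n
      rw [aux_shift_iter]
      exact (hd n).symm
    · rintro y ⟨k, rfl⟩
      exact aux_mem_iter hX.2.2 hx₀ k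
end

section
/- Let (X,σ) be a shift space with language 𝓛, and let 𝓖 ⊆ 𝓛 have (S)-specification with gap size t. Then #𝓖_n ≤ e^{(n+t) h(𝓛)} for every n ∈ ℕ. -/
open MeasureTheory Filter Topology
open scoped ENNReal

section AuxSpec

variable {p : ℕ}

lemma wordsOfLen_finite (D : Set (List (Fin p))) (k : ℕ) : (wordsOfLen D k).Finite :=
  (List.finite_length_eq (Fin p) k).subset (fun _ hw => hw.2)

lemma ncard_wordsOfLen_le (hp : 0 < p) (D : Set (List (Fin p))) (k : ℕ) :
    (wordsOfLen D k).ncard ≤ p ^ k := by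
  have h := Set.ncard_le_ncard_of_injOn (s := wordsOfLen D k)
    (t := (Set.univ : Set (Fin k → Fin p)))
    (fun (w : List (Fin p)) (i : Fin k) => w.getD i ⟨0, hp⟩)
    (fun w _ => Set.mem_univ _) ?_ Set.finite_univ
  · simpa [Set.ncard_univ] using h
  · intro w hw w' hw' h
    apply List.ext_getElem (by rw [hw.2, hw'.2])
    intro i h1 h2
    have hi : i < k := by rwa [hw.2] at h1
    have h3 : w.getD i ⟨0, hp⟩ = w'.getD i ⟨0, hp⟩ := congrFun h ⟨i, hi⟩
    rwa [List.getD_eq_getElem w _ h1, List.getD_eq_getElem w' _ h2] at h3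

lemma exists_word_of_len (X : Set (FullShift p)) (hX : X.Nonempty) (k : ℕ) :
    ∃ w ∈ language X, w.length = k := by
  obtain ⟨x, hx⟩ := hX
  refine ⟨List.ofFn (fun i : Fin k => x i), ⟨x, hx, 0, ?_⟩, List.length_ofFn⟩
  intro i
  simp [List.get_ofFn]

lemma glueWords_length (n t : ℕ) : ∀ (m : ℕ) (w v : ℕ → List (Fin p)),
    (∀ i ≤ m, (w i).length = n) → (∀ i < m, (v i).length = t) →
    (glueWords m w v).length = n + m * (n + t) := by
  intro m
  induction m with
  | zero => intro w v hw _; simpa [glueWords] using hw 0 le_rfl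
  | succ m ih =>
    intro w v hw hv
    simp only [glueWords, List.length_append]
    rw [ih w v (fun i hi => hw i (hi.trans (Nat.le_succ m)))
        (fun i hi => hv i (hi.trans (Nat.lt_succ_self m))),
      hv m (Nat.lt_succ_self m), hw (m + 1) le_rfl]
    ring

lemma glueWords_extract (n t : ℕ) : ∀ (m : ℕ) (w v : ℕ → List (Fin p)),
    (∀ i ≤ m, (w i).length = n) → (∀ i < m, (v i).length = t) →
    ∀ i ≤ m, ((glueWords m w v).drop (i * (n + t))).take n = w i := by
  intro m
  induction m with
  | zero =>
    intro w v hw _ i hi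
    have hi0 : i = 0 := Nat.le_zero.mp hi
    subst hi0
    rw [Nat.zero_mul]
    show ((w 0).drop 0).take n = w 0
    rw [List.drop_zero, ← hw 0 le_rfl, List.take_length]
  | succ m ih =>
    intro w v hw hv i hi
    have hw' : ∀ j ≤ m, (w j).length = n := fun j hj => hw j (hj.trans (Nat.le_succ m))
    have hv' : ∀ j < m, (v j).length = t := fun j hj => hv j (hj.trans (Nat.lt_succ_self m))
    have hlen : (glueWords m w v).length = n + m * (n + t) := glueWords_length n t m w v hw' hv'
    show (((glueWords m w v ++ v m) ++ w (m + 1)).drop (i * (n + t))).take n = w i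
    rcases Nat.lt_or_ge i (m + 1) with h | h
    · have hi' : i ≤ m := Nat.lt_succ_iff.mp h
      have hkn : i * (n + t) + n ≤ (glueWords m w v).length := by
        rw [hlen]
        have : i * (n + t) ≤ m * (n + t) := Nat.mul_le_mul_right _ hi'
        omega
      rw [List.append_assoc, List.drop_append_of_le_length (by omega),
        List.take_append_of_le_length (by rw [List.length_drop]; omega)]
      exact ih w v hw' hv' i hi'
    · have hi1 : i = m + 1 := le_antisymm hi h
      subst hi1
      rw [List.drop_left' (by rw [List.length_append, hlen, hv m (Nat.lt_succ_self m)]; ring),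
        ← hw (m + 1) le_rfl, List.take_length]

lemma pow_ncard_le (X : Set (FullShift p)) (G : Set (List (Fin p)))
    (t : ℕ) (hspec : HasSpecS (language X) G t) (n : ℕ) (m : ℕ) :
    (wordsOfLen G n).ncard ^ (m + 1) ≤
      (wordsOfLen (language X) (n + m * (n + t))).ncard := by
  classical
  have hSfin := wordsOfLen_finite G n
  have hTfin := wordsOfLen_finite (language X) (n + m * (n + t))
  set S := hSfin.toFinset with hS
  set T := hTfin.toFinset with hT
  set wf : (Fin (m + 1) → List (Fin p)) → ℕ → List (Fin p) :=
    fun f i => f ⟨min i m, by omega⟩ with hwf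
  set g : (Fin (m + 1) → List (Fin p)) → List (Fin p) := fun f =>
    if h : ∀ i ≤ m, wf f i ∈ G then
      glueWords m (wf f) (Classical.choose (hspec m (wf f) h)) else [] with hg
  have hwfi : ∀ (f : Fin (m + 1) → List (Fin p)) (i : Fin (m + 1)), wf f i = f i := by
    intro f i
    exact congrArg f (Fin.ext (by simp [Nat.min_eq_left (Nat.lt_succ_iff.mp i.isLt)]))
  have hmem : ∀ f ∈ Fintype.piFinset (fun _ : Fin (m + 1) => S),
      (∀ i ≤ m, wf f i ∈ G) ∧ (∀ i ≤ m, (wf f i).length = n) := by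
    intro f hf
    have hf' : ∀ i : Fin (m + 1), f i ∈ wordsOfLen G n := by
      intro i
      have := Fintype.mem_piFinset.mp hf i
      rwa [hS, Set.Finite.mem_toFinset] at this
    constructor
    · intro i hi
      have he : wf f i = f ⟨i, by omega⟩ :=
        congrArg f (Fin.ext (by simp [Nat.min_eq_left hi]))
      rw [he]
      exact (hf' ⟨i, by omega⟩).1
    · intro i hi
      have he : wf f i = f ⟨i, by omega⟩ :=
        congrArg f (Fin.ext (by simp [Nat.min_eq_left hi]))
      rw [he]
      exact (hf' ⟨i, by omega⟩).2
  have hginto : ∀ f ∈ Fintype.piFinset (fun _ : Fin (m + 1) => S), g f ∈ T := by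
    intro f hf
    obtain ⟨h1, h2⟩ := hmem f hf
    obtain ⟨hv, hmemL⟩ := Classical.choose_spec (hspec m (wf f) h1)
    rw [hg]
    simp only [dif_pos h1]
    rw [hT, Set.Finite.mem_toFinset]
    exact ⟨hmemL, glueWords_length n t m _ _ h2 (fun i hi => (hv i hi).2)⟩
  have hinj : Set.InjOn g ↑(Fintype.piFinset (fun _ : Fin (m + 1) => S)) := by
    intro f hf f' hf' heq
    obtain ⟨h1, h2⟩ := hmem f hf
    obtain ⟨h1', h2'⟩ := hmem f' hf'
    obtain ⟨hv, _⟩ := Classical.choose_spec (hspec m (wf f) h1)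
    obtain ⟨hv', _⟩ := Classical.choose_spec (hspec m (wf f') h1')
    rw [hg] at heq
    simp only [dif_pos h1, dif_pos h1'] at heq
    funext i
    rw [← hwfi f i, ← hwfi f' i]
    have e1 := glueWords_extract n t m (wf f) _ h2 (fun j hj => (hv j hj).2)
      i (Nat.lt_succ_iff.mp i.isLt)
    have e2 := glueWords_extract n t m (wf f') _ h2' (fun j hj => (hv' j hj).2)
      i (Nat.lt_succ_iff.mp i.isLt)
    rw [← e1, ← e2, heq]
  have hcard := Finset.card_le_card_of_injOn g hginto hinj
  rw [Fintype.card_piFinset] at hcard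
  simp only [Finset.prod_const, Finset.card_univ, Fintype.card_fin] at hcard
  rwa [Set.ncard_eq_toFinset_card _ hSfin, Set.ncard_eq_toFinset_card _ hTfin]

end AuxSpec

/-- **Lemma 5.2.** If `𝓖 ⊆ 𝓛` has (S)-specification with gap size `t`, then
`#𝓖_n ≤ e^{(n+t) h(𝓛)}` for every `n`. -/
theorem card_G_le_of_spec {p : ℕ} (X : Set (FullShift p)) (hX : IsShiftSpace X)
    (G : Set (List (Fin p))) (hG : G ⊆ language X)
    (t : ℕ) (hspec : HasSpecS (language X) G t) (n : ℕ) :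
    ((wordsOfLen G n).ncard : ℝ) ≤ Real.exp (((n : ℝ) + t) * htop X) := by
  classical
  obtain ⟨x0, hx0⟩ := hX.1
  have hp : 0 < p := Fin.pos (x0 0)
  set u : ℕ → ℝ := fun k => Real.log ((wordsOfLen (language X) k).ncard) / k with hu
  have hhtop : htop X = Filter.atTop.limsup u := rfl
  have hL1 : ∀ k, 1 ≤ (wordsOfLen (language X) k).ncard := by
    intro k
    obtain ⟨w, hw, hlen⟩ := exists_word_of_len X hX.1 k
    exact (Set.ncard_pos (wordsOfLen_finite _ _)).mpr ⟨w, hw, hlen⟩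
  have hu0 : ∀ k, 0 ≤ u k := fun k =>
    div_nonneg (Real.log_nonneg (by exact_mod_cast hL1 k)) (Nat.cast_nonneg k)
  have hub : ∀ k, u k ≤ Real.log p := by
    intro k
    rcases Nat.eq_zero_or_pos k with rfl | hk
    · simpa [hu] using Real.log_nonneg (by exact_mod_cast hp)
    · have hcard : ((wordsOfLen (language X) k).ncard : ℝ) ≤ (p : ℝ) ^ k := by
        exact_mod_cast ncard_wordsOfLen_le hp (language X) k
      have hlog : Real.log ((wordsOfLen (language X) k).ncard) ≤ (k : ℝ) * Real.log p := by
        rw [← Real.log_pow]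
        exact Real.log_le_log (by exact_mod_cast Nat.lt_of_lt_of_le Nat.zero_lt_one (hL1 k)) hcard
      rw [hu]
      rw [div_le_iff₀ (by exact_mod_cast hk)]
      linarith
  have hbdd : Filter.IsBoundedUnder (· ≤ ·) Filter.atTop u :=
    Filter.isBoundedUnder_of ⟨Real.log p, hub⟩
  set a := (wordsOfLen G n).ncard with ha
  rcases Nat.eq_zero_or_pos a with ha0 | ha0
  · rw [ha0]
    exact_mod_cast (Real.exp_pos _).le
  have hh0 : 0 ≤ htop X := by
    rw [hhtop]
    exact le_limsup_of_frequently_le (Filter.Frequently.of_forall hu0) hbdd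
  rcases Nat.eq_zero_or_pos (n + t) with hnt | hnt
  · have hn : n = 0 := by omega
    have ht' : t = 0 := by omega
    have hle : a ≤ 1 := by
      have hsub : wordsOfLen G 0 ⊆ {([] : List (Fin p))} := by
        intro w hw
        simpa [List.length_eq_zero_iff] using hw.2
      calc a = (wordsOfLen G 0).ncard := by rw [ha, hn]
        _ ≤ ({([] : List (Fin p))} : Set _).ncard :=
            Set.ncard_le_ncard hsub (Set.finite_singleton _)
        _ = 1 := Set.ncard_singleton _
    subst hn; subst ht'
    simpa using (show (a : ℝ) ≤ 1 from by exact_mod_cast hle)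
  -- main case
  set φ : ℕ → ℕ := fun m => n + (m + 1) * (n + t) with hφdef
  have hlogbound : ∀ m : ℕ, Real.log a / (n + t) ≤ u (φ m) := by
    intro m
    have hφm : φ m = n + (m + 1) * (n + t) := rfl
    have hK : (1 : ℕ) ≤ φ m := by
      have : 1 ≤ (m + 1) * (n + t) := Nat.one_le_iff_ne_zero.mpr (by positivity)
      rw [hφm]; omega
    have hcard : (a : ℝ) ^ (m + 2) ≤ ((wordsOfLen (language X) (φ m)).ncard : ℝ) := by
      have := pow_ncard_le X G t hspec n (m + 1)
      rw [← ha] at this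
      exact_mod_cast this
    set N := (wordsOfLen (language X) (φ m)).ncard with hN
    have hN1 : (1 : ℝ) ≤ N := by exact_mod_cast hL1 (φ m)
    have hloga : ((m : ℝ) + 2) * Real.log a ≤ Real.log N := by
      have := Real.log_le_log (by positivity) hcard
      rwa [Real.log_pow, Nat.cast_add, Nat.cast_ofNat] at this
    have huK : u (φ m) = Real.log N / (φ m) := rfl
    have hKpos : (0 : ℝ) < φ m := by exact_mod_cast hK
    have hntpos : (0 : ℝ) < (n : ℝ) + t := by
      have : (0 : ℕ) < n + t := hnt
      exact_mod_cast this
    rw [huK, div_le_div_iff₀ hntpos hKpos]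
    have hlogN0 : 0 ≤ Real.log N := Real.log_nonneg hN1
    have hφle : (φ m : ℝ) ≤ ((m : ℝ) + 2) * ((n : ℝ) + t) := by
      have : (φ m : ℕ) ≤ (m + 2) * (n + t) := by
        have h2 : (m + 2) * (n + t) = (m + 1) * (n + t) + (n + t) := by ring
        rw [hφm, h2]; omega
      calc (φ m : ℝ) ≤ (((m + 2) * (n + t) : ℕ) : ℝ) := by exact_mod_cast this
        _ = ((m : ℝ) + 2) * ((n : ℝ) + t) := by push_cast; ring
    have hloga0 : 0 ≤ Real.log a ∨ Real.log a < 0 := le_or_gt _ _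
    rcases hloga0 with h | h
    · calc Real.log a * (φ m) ≤ Real.log a * (((m : ℝ) + 2) * ((n : ℝ) + t)) := by
            exact mul_le_mul_of_nonneg_left hφle h
        _ = (((m : ℝ) + 2) * Real.log a) * ((n : ℝ) + t) := by ring
        _ ≤ Real.log N * ((n : ℝ) + t) := by
            exact mul_le_mul_of_nonneg_right hloga hntpos.le
    · have : Real.log a * (φ m) ≤ 0 := mul_nonpos_of_nonpos_of_nonneg h.le hKpos.le
      exact this.trans (mul_nonneg hlogN0 hntpos.le)
  have hφmono : StrictMono φ := by
    intro i j hij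
    have : (i + 1) * (n + t) < (j + 1) * (n + t) :=
      (Nat.mul_lt_mul_right hnt).mpr (by omega)
    simpa [hφdef] using Nat.add_lt_add_left this n
  have hφtop : Filter.Tendsto φ Filter.atTop Filter.atTop := hφmono.tendsto_atTop
  have hbddφ : Filter.IsBoundedUnder (· ≤ ·) Filter.atTop (u ∘ φ) :=
    Filter.isBoundedUnder_of ⟨Real.log p, fun m => hub (φ m)⟩
  have hle1 : Real.log a / (n + t) ≤ Filter.atTop.limsup (u ∘ φ) :=
    le_limsup_of_frequently_le (Filter.Frequently.of_forall hlogbound) hbddφ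
  have hle2 : Filter.atTop.limsup (u ∘ φ) ≤ Filter.atTop.limsup u := by
    rw [Filter.limsup_comp u φ Filter.atTop]
    have hcob : Filter.IsCoboundedUnder (· ≤ ·) (Filter.map φ Filter.atTop) u := by
      have : Filter.IsBoundedUnder (· ≥ ·) (Filter.map φ Filter.atTop) u :=
        Filter.isBoundedUnder_of ⟨0, fun k => hu0 k⟩
      exact Filter.IsBoundedUnder.isCoboundedUnder_le
        (l := Filter.map φ Filter.atTop) (u := u) this
    exact Filter.limsup_le_limsup_of_le hφtop hcob hbdd
  have hfinal : Real.log a ≤ ((n : ℝ) + t) * htop X := by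
    have hntpos : (0 : ℝ) < (n : ℝ) + t := by
      have : (0 : ℕ) < n + t := hnt
      exact_mod_cast this
    rw [hhtop]
    have := hle1.trans hle2
    rw [div_le_iff₀ hntpos] at this
    linarith [this]
  calc (a : ℝ) = Real.exp (Real.log a) := by
        rw [Real.exp_log (by exact_mod_cast ha0)]
    _ ≤ Real.exp (((n : ℝ) + t) * htop X) := Real.exp_le_exp.mpr hfinal
end
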